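/- Let k ≥ 2 and let c be a proper total colouring with k+1 colours of the graph H_k (K_{k,k} minus one vertex, with partite sets X = {x_1,...,x_k} of size k and Y = {y_2,...,y_k} of size k−1). Then all vertices of Y receive the same colour under c, and the vertices of X receive the remaining k colours, one each. -/

import Mathlib

open SimpleGraph

/-- A proper total colouring of `G` with `p` colours: vertex colours `cv`,
edge colours `ce` (symmetric on adjacent pairs); adjacent vertices, adjacent
edges and incident vertex-edge pairs get distinct colours. -/
def IsTotalColoring {V : Type*} (G : SimpleGraph V) (p : ℕ)
    (cv : V → Fin p) (ce : V → V → Fin p) : Prop :=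
  (∀ u v, G.Adj u v → ce u v = ce v u) ∧
  (∀ u v, G.Adj u v → cv u ≠ cv v) ∧
  (∀ u v w, G.Adj u v → G.Adj u w → v ≠ w → ce u v ≠ ce u w) ∧
  (∀ u v, G.Adj u v → ce u v ≠ cv u ∧ ce u v ≠ cv v)

/-- circular distance condition: `q ≤ |a - b| ≤ p - q`. -/
def circOk (p q a b : ℕ) : Prop :=
  q ≤ max a b - min a b ∧ max a b - min a b ≤ p - q

/-- A `(p,q)`-total colouring of `G`. -/
def IsCircTotalColoring {V : Type*} (G : SimpleGraph V) (p q : ℕ)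
    (cv : V → ℕ) (ce : V → V → ℕ) : Prop :=
  (∀ v, cv v < p) ∧
  (∀ u v, G.Adj u v → ce u v < p) ∧
  (∀ u v, G.Adj u v → ce u v = ce v u) ∧
  (∀ u v, G.Adj u v → circOk p q (cv u) (cv v)) ∧
  (∀ u v w, G.Adj u v → G.Adj u w → v ≠ w → circOk p q (ce u v) (ce u w)) ∧
  (∀ u v, G.Adj u v → circOk p q (ce u v) (cv u) ∧ circOk p q (ce u v) (cv v))

/-- The circular total chromatic number of `G`. -/
noncomputable def circTotalChromatic {V : Type*} (G : SimpleGraph V) : ℝ :=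
  sInf {x : ℝ | ∃ p q : ℕ, 0 < q ∧
    (∃ cv ce, IsCircTotalColoring G p q cv ce) ∧ x = (p : ℝ) / q}

/-- The chain graph `G_{k,n}`: `n` blocks, each a copy of `K_{k,k-1}` with
partite sets `Fin k` (the `X`-side) and `Fin (k-1)` (the `Y`-side); in block `i`
the designated link vertices are `x_i = (i, inl 0)` and `x'_i = (i, inl 1)`;
the extra vertex `u` is `none`, joined to `x'_1` and `x_n`, and `x_i` is joined
to `x'_{i+1}`. -/
def Gkn (k n : ℕ) : SimpleGraph (Option (Fin n × (Fin k ⊕ Fin (k - 1)))) :=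
  SimpleGraph.fromRel (fun a b =>
    (∃ (i : Fin n) (x : Fin k) (y : Fin (k - 1)),
        a = some (i, Sum.inl x) ∧ b = some (i, Sum.inr y)) ∨
    (∃ (i j : Fin n) (x x' : Fin k), (j : ℕ) = (i : ℕ) + 1 ∧ (x : ℕ) = 0 ∧ (x' : ℕ) = 1 ∧
        a = some (i, Sum.inl x) ∧ b = some (j, Sum.inl x')) ∨
    (∃ (i : Fin n) (x' : Fin k), (i : ℕ) = 0 ∧ (x' : ℕ) = 1 ∧
        a = none ∧ b = some (i, Sum.inl x')) ∨
    (∃ (i : Fin n) (x : Fin k), (i : ℕ) = n - 1 ∧ (x : ℕ) = 0 ∧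
        a = some (i, Sum.inl x) ∧ b = none))

/-- edges at a `Y`-vertex use every colour other than the vertex's colour -/
lemma auxA (k : ℕ) (cv : Fin k ⊕ Fin (k - 1) → Fin (k + 1))
    (ce : (Fin k ⊕ Fin (k - 1)) → (Fin k ⊕ Fin (k - 1)) → Fin (k + 1))
    (h : IsTotalColoring (completeBipartiteGraph (Fin k) (Fin (k - 1))) (k + 1) cv ce)
    (j : Fin (k - 1)) (c : Fin (k + 1)) (hc : c ≠ cv (Sum.inr j)) :
    ∃ x : Fin k, ce (Sum.inr j) (Sum.inl x) = c := by
  obtain ⟨hsym, hv, he, hve⟩ := h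
  have hinj : Function.Injective (fun x : Fin k => ce (Sum.inr j) (Sum.inl x)) := by
    intro x1 x2 hx
    by_contra hne
    exact he (Sum.inr j) (Sum.inl x1) (Sum.inl x2) (by simp) (by simp)
      (by simpa using hne) hx
  have hsub : (Finset.univ.image (fun x : Fin k => ce (Sum.inr j) (Sum.inl x))) ⊆
      Finset.univ.erase (cv (Sum.inr j)) := by
    intro a ha
    simp only [Finset.mem_image] at ha
    obtain ⟨x, _, rfl⟩ := ha
    exact Finset.mem_erase.2 ⟨(hve (Sum.inr j) (Sum.inl x) (by simp)).1, Finset.mem_univ _⟩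
  have hcard : (Finset.univ.image (fun x : Fin k => ce (Sum.inr j) (Sum.inl x))).card = k := by
    rw [Finset.card_image_of_injective _ hinj, Finset.card_univ, Fintype.card_fin]
  have heq : (Finset.univ.image (fun x : Fin k => ce (Sum.inr j) (Sum.inl x))) =
      Finset.univ.erase (cv (Sum.inr j)) := by
    apply Finset.eq_of_subset_of_card_le hsub
    rw [hcard, Finset.card_erase_of_mem (Finset.mem_univ _), Finset.card_univ, Fintype.card_fin]
    omega
  have : c ∈ Finset.univ.image (fun x : Fin k => ce (Sum.inr j) (Sum.inl x)) := by
    rw [heq]; exact Finset.mem_erase.2 ⟨hc, Finset.mem_univ _⟩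
  simpa using this

lemma auxB (k : ℕ) (cv : Fin k ⊕ Fin (k - 1) → Fin (k + 1))
    (ce : (Fin k ⊕ Fin (k - 1)) → (Fin k ⊕ Fin (k - 1)) → Fin (k + 1))
    (h : IsTotalColoring (completeBipartiteGraph (Fin k) (Fin (k - 1))) (k + 1) cv ce)
    (c : Fin (k + 1)) :
    (Finset.univ.filter (fun x : Fin k => cv (Sum.inl x) = c)).card ≤
      1 + (Finset.univ.filter (fun j : Fin (k - 1) => cv (Sum.inr j) = c)).card := by
  obtain ⟨hsym, hv, he, hve⟩ := h
  classical
  set A := Finset.univ.filter (fun x : Fin k => cv (Sum.inl x) = c) with hA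
  set A' := Finset.univ.filter (fun x : Fin k => ¬ cv (Sum.inl x) = c) with hA'
  set B := Finset.univ.filter (fun j : Fin (k - 1) => ¬ cv (Sum.inr j) = c) with hB
  set D := Finset.univ.filter (fun j : Fin (k - 1) => cv (Sum.inr j) = c) with hD
  -- choice function
  have hex : ∀ j ∈ B, ∃ x : Fin k, ce (Sum.inr j) (Sum.inl x) = c := by
    intro j hj
    refine auxA k cv ce ⟨hsym, hv, he, hve⟩ j c ?_
    simp only [hB, Finset.mem_filter] at hj
    exact fun hcc => hj.2 hcc.symm
  choose F hF using hex
  have hBA' : B.card ≤ A'.card := by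
    rw [← Finset.card_attach]
    apply Finset.card_le_card_of_injOn (fun j => F j.1 j.2)
    · intro j _
      rw [hA', Finset.mem_coe, Finset.mem_filter]
      refine ⟨Finset.mem_univ _, ?_⟩
      intro hcc
      exact (hve (Sum.inr j.1) (Sum.inl (F j.1 j.2)) (by simp)).2 (by rw [hF j.1 j.2, hcc])
    · rintro ⟨j1, hj1⟩ - ⟨j2, hj2⟩ - hFeq
      simp only at hFeq
      apply Subtype.ext
      simp only
      by_contra hne
      have h1 : ce (Sum.inl (F j1 hj1)) (Sum.inr j1) = c := by
        rw [← hsym (Sum.inr j1) (Sum.inl (F j1 hj1)) (by simp)]; exact hF j1 hj1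
      have h2 : ce (Sum.inl (F j1 hj1)) (Sum.inr j2) = c := by
        rw [hFeq, ← hsym (Sum.inr j2) (Sum.inl (F j2 hj2)) (by simp)]; exact hF j2 hj2
      exact he (Sum.inl (F j1 hj1)) (Sum.inr j1) (Sum.inr j2) (by simp) (by simp)
        (by simpa using hne) (h1.trans h2.symm)
  have hAA' : A.card + A'.card = k := by
    rw [hA, hA', Finset.card_filter_add_card_filter_not]
    simp
  have hBD : D.card + B.card = k - 1 := by
    rw [hD, hB, Finset.card_filter_add_card_filter_not]
    simp
  omega

theorem stmt1 (k : ℕ) (hk : 2 ≤ k)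
    (cv : Fin k ⊕ Fin (k - 1) → Fin (k + 1))
    (ce : (Fin k ⊕ Fin (k - 1)) → (Fin k ⊕ Fin (k - 1)) → Fin (k + 1))
    (h : IsTotalColoring (completeBipartiteGraph (Fin k) (Fin (k - 1))) (k + 1) cv ce) :
    (∀ j j' : Fin (k - 1), cv (Sum.inr j) = cv (Sum.inr j')) ∧
    Function.Injective (fun i : Fin k => cv (Sum.inl i)) ∧
    (∀ (i : Fin k) (j : Fin (k - 1)), cv (Sum.inl i) ≠ cv (Sum.inr j)) := by
  classical
  have hxy : ∀ (i : Fin k) (j : Fin (k - 1)), cv (Sum.inl i) ≠ cv (Sum.inr j) := by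
    intro i j
    exact h.2.1 (Sum.inl i) (Sum.inr j) (by simp)
  have hY : ∀ j j' : Fin (k - 1), cv (Sum.inr j) = cv (Sum.inr j') := by
    intro j j'
    by_contra hne
    set c0 := cv (Sum.inr j) with hc0
    set c1 := cv (Sum.inr j') with hc1
    -- pigeonhole: all X colours avoid c0, c1
    have hmaps : ∀ x : Fin k, cv (Sum.inl x) ∈ (Finset.univ.erase c0).erase c1 := by
      intro x
      exact Finset.mem_erase.2 ⟨hxy x j', Finset.mem_erase.2 ⟨hxy x j, Finset.mem_univ _⟩⟩
    have hcardt : ((Finset.univ.erase c0).erase c1 : Finset (Fin (k+1))).card = k - 1 := by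
      rw [Finset.card_erase_of_mem (Finset.mem_erase.2 ⟨fun hcc => hne hcc.symm, Finset.mem_univ _⟩),
        Finset.card_erase_of_mem (Finset.mem_univ _), Finset.card_univ, Fintype.card_fin]
      omega
    obtain ⟨x1, _, x2, _, hx12, heq⟩ :=
      Finset.exists_ne_map_eq_of_card_lt_of_maps_to
        (s := (Finset.univ : Finset (Fin k))) (t := (Finset.univ.erase c0).erase c1)
        (by rw [hcardt, Finset.card_univ, Fintype.card_fin]; omega)
        (fun x _ => hmaps x)
    set c := cv (Sum.inl x1) with hc
    have hd : (Finset.univ.filter (fun j'' : Fin (k - 1) => cv (Sum.inr j'') = c)).card = 0 := by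
      rw [Finset.card_eq_zero, Finset.filter_eq_empty_iff]
      intro j'' _
      exact fun hcc => hxy x1 j'' hcc.symm
    have ha : 2 ≤ (Finset.univ.filter (fun x : Fin k => cv (Sum.inl x) = c)).card := by
      apply Finset.one_lt_card.2
      exact ⟨x1, by simp [hc], x2, by simp [Finset.mem_filter, ← heq, hc], hx12⟩
    have := auxB k cv ce h c
    omega
  refine ⟨hY, ?_, hxy⟩
  intro x1 x2 hx
  simp only at hx
  set c := cv (Sum.inl x1) with hc
  have hd : (Finset.univ.filter (fun j'' : Fin (k - 1) => cv (Sum.inr j'') = c)).card = 0 := by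
    rw [Finset.card_eq_zero, Finset.filter_eq_empty_iff]
    intro j'' _
    exact fun hcc => hxy x1 j'' hcc.symm
  have hcard1 := auxB k cv ce h c
  have hmem1 : x1 ∈ Finset.univ.filter (fun x : Fin k => cv (Sum.inl x) = c) := by simp [hc]
  have hmem2 : x2 ∈ Finset.univ.filter (fun x : Fin k => cv (Sum.inl x) = c) := by
    simp [Finset.mem_filter, ← hx, hc]
  have : (Finset.univ.filter (fun x : Fin k => cv (Sum.inl x) = c)).card ≤ 1 := by omega
  exact Finset.card_le_one.1 this _ hmem1 _ hmem2
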